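/- arXiv:math/0109162 — 2 statements merged into one kernel-verified Lean document; each statement's English description precedes it below -/
import Mathlib

section
/- Let V be a real inner product space of finite dimension n−2 and let A be a symmetric bilinear form on V. Then the bracket on the vector space V ⊕ V* ⊕ ℝe₊ ⊕ ℝe₋ defined by [e₋, v] = v♭, [e₋, α] = A(α♯), [α, v] = A(v, α♯)·e₊ for v ∈ V, α ∈ V* (all other brackets of basis elements zero, extended bilinearly and antisymmetrically) satisfies the Jacobi identity, and hence defines a Lie algebra structure 𝔤_A on V ⊕ V* ⊕ ℝe₊ ⊕ ℝe₋. -/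
open scoped RealInnerProductSpace

noncomputable section

variable {V : Type*} [NormedAddCommGroup V] [InnerProductSpace ℝ V] [FiniteDimensional ℝ V]

/-- The musical isomorphism `♭ : V → V*` induced by the inner product. -/
def flat (v : V) : Module.Dual ℝ V :=
  ((InnerProductSpace.toDual ℝ V) v).toLinearMap

/-- The musical isomorphism `♯ : V* → V` induced by the inner product. -/
def sharp (α : Module.Dual ℝ V) : V :=
  (InnerProductSpace.toDual ℝ V).symm (LinearMap.toContinuousLinearMap α)

/-- The underlying vector space `V ⊕ V* ⊕ ℝe₊ ⊕ ℝe₋` of the Cahen--Wallach Lie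
algebra `𝔤_A`; an element `(v, α, a, b)` stands for `v + α + a•e₊ + b•e₋`. -/
abbrev CW (V : Type*) [NormedAddCommGroup V] [InnerProductSpace ℝ V]
    [FiniteDimensional ℝ V] :=
  V × Module.Dual ℝ V × ℝ × ℝ

/-- The basis element `e₊` of `𝔤_A`. -/
def ePlus : CW V := (0, 0, 1, 0)

/-- The basis element `e₋` of `𝔤_A`. -/
def eMinus : CW V := (0, 0, 0, 1)

/-- The Cahen--Wallach bracket on `V ⊕ V* ⊕ ℝe₊ ⊕ ℝe₋` determined (by bilinearity
and antisymmetry) by `[e₋, v] = v♭`, `[e₋, α] = A(α♯)` (the symmetric endomorphism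
`v ↦ (A v)♯` applied to `α♯`) and `[α, v] = A(v, α♯)·e₊`, all other brackets zero. -/
def cwBracket (A : LinearMap.BilinForm ℝ V) (x y : CW V) : CW V :=
  (x.2.2.2 • sharp (A (sharp y.2.1)) - y.2.2.2 • sharp (A (sharp x.2.1)),
   x.2.2.2 • flat y.1 - y.2.2.2 • flat x.1,
   A y.1 (sharp x.2.1) - A x.1 (sharp y.2.1),
   0)

lemma sharp_add (α β : Module.Dual ℝ V) : sharp (α + β) = sharp α + sharp β := by
  simp [sharp, map_add]

lemma sharp_smul (r : ℝ) (α : Module.Dual ℝ V) : sharp (r • α) = r • sharp α := by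
  simp [sharp, map_smul]

lemma flat_add (v w : V) : flat (v + w) = flat v + flat w := by
  ext x; simp [flat, inner_add_left]

lemma flat_smul (r : ℝ) (v : V) : flat (r • v) = r • flat v := by
  ext x; simp [flat, inner_smul_left]


lemma sharp_sub (α β : Module.Dual ℝ V) : sharp (α - β) = sharp α - sharp β := by
  simp [sharp, map_sub]

lemma flat_sub (v w : V) : flat (v - w) = flat v - flat w := by
  ext x; simp [flat, inner_sub_left]

lemma sharp_flat (v : V) : sharp (flat v) = v := by
  simp [sharp, flat]
  exact (InnerProductSpace.toDual ℝ V).symm_apply_apply v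

lemma flat_sharp (α : Module.Dual ℝ V) : flat (sharp α) = α := by
  ext x
  simp [sharp, flat]

lemma apply_sharp (α β : Module.Dual ℝ V) : α (sharp β) = β (sharp α) := by
  have h : ∀ γ : Module.Dual ℝ V, ∀ w, γ w = ⟪sharp γ, w⟫ := by
    intro γ w
    conv_lhs => rw [← flat_sharp γ]
    simp [flat]
  rw [h α, h β, real_inner_comm]

lemma key_symm (A : LinearMap.BilinForm ℝ V) (hA : A.IsSymm) (β γ : Module.Dual ℝ V) :
    A (sharp (A (sharp β))) (sharp γ) = A (sharp (A (sharp γ))) (sharp β) := by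
  rw [← LinearMap.BilinForm.isSymm_def.1 hA (sharp γ) (sharp (A (sharp β)))]
  rw [apply_sharp (A (sharp γ)) (A (sharp β))]
  exact LinearMap.BilinForm.isSymm_def.1 hA (sharp β) (sharp (A (sharp γ)))

/-- For `A` a symmetric bilinear form on a finite-dimensional real
inner product space `V`, the Cahen--Wallach bracket on `V ⊕ V* ⊕ ℝe₊ ⊕ ℝe₋` is
bilinear, antisymmetric and satisfies the Jacobi identity, hence defines a Lie
algebra structure `𝔤_A`. -/
theorem cwBracket_lie_algebra (A : LinearMap.BilinForm ℝ V) (hA : A.IsSymm) :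
    (∀ x y z : CW V, cwBracket A (x + y) z = cwBracket A x z + cwBracket A y z) ∧
    (∀ (r : ℝ) (x y : CW V), cwBracket A (r • x) y = r • cwBracket A x y) ∧
    (∀ x y z : CW V, cwBracket A x (y + z) = cwBracket A x y + cwBracket A x z) ∧
    (∀ (r : ℝ) (x y : CW V), cwBracket A x (r • y) = r • cwBracket A x y) ∧
    (∀ x y : CW V, cwBracket A x y = - cwBracket A y x) ∧
    (∀ x y z : CW V,
      cwBracket A x (cwBracket A y z) + cwBracket A y (cwBracket A z x) +
        cwBracket A z (cwBracket A x y) = 0) := by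
  refine ⟨?_, ?_, ?_, ?_, ?_, ?_⟩
  · intro x y z
    simp only [cwBracket, Prod.fst_add, Prod.snd_add, Prod.mk_add_mk, Prod.mk.injEq,
      sharp_add, flat_add, map_add, LinearMap.add_apply]
    all_goals and_intros <;> first | module | ring
  · intro r x y
    simp only [cwBracket, Prod.smul_fst, Prod.smul_snd, Prod.smul_mk, Prod.mk.injEq,
      sharp_smul, flat_smul, map_smul, LinearMap.smul_apply, smul_eq_mul]
    all_goals and_intros <;> first | module | ring
  · intro x y z
    simp only [cwBracket, Prod.fst_add, Prod.snd_add, Prod.mk_add_mk, Prod.mk.injEq,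
      sharp_add, flat_add, map_add, LinearMap.add_apply]
    all_goals and_intros <;> first | module | ring
  · intro r x y
    simp only [cwBracket, Prod.smul_fst, Prod.smul_snd, Prod.smul_mk, Prod.mk.injEq,
      sharp_smul, flat_smul, map_smul, LinearMap.smul_apply, smul_eq_mul]
    all_goals and_intros <;> first | module | ring
  · intro x y
    simp only [cwBracket, Prod.neg_mk, Prod.mk.injEq, neg_sub, neg_zero]
    all_goals and_intros <;> first | module | ring
  · intro x y z
    obtain ⟨v1, a1, p1, b1⟩ := x
    obtain ⟨v2, a2, p2, b2⟩ := y
    obtain ⟨v3, a3, p3, b3⟩ := z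
    simp only [cwBracket, Prod.mk_add_mk, Prod.mk.injEq, Prod.mk_eq_zero,
      sharp_add, sharp_smul, flat_add, flat_smul, sharp_flat, flat_sharp,
      map_add, map_smul, map_sub, map_zero, map_neg, sharp_sub, flat_sub,
      LinearMap.add_apply, LinearMap.smul_apply, LinearMap.sub_apply, LinearMap.zero_apply,
      smul_sub, sub_smul, smul_smul, smul_zero]
    and_intros
    · module
    · module
    · have hA' : ∀ v w : V, A v w = A w v := fun v w => LinearMap.BilinForm.isSymm_def.1 hA v w
      simp only [smul_eq_mul]
      linear_combination b2 * key_symm A hA a3 a1 + b3 * key_symm A hA a1 a2 +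
        b1 * key_symm A hA a2 a3 + b2 * hA' v3 v1 + b3 * hA' v1 v2 + b1 * hA' v2 v3
    · simp
end
end

section
/- Let V be a finite-dimensional real inner product space, A and A' symmetric bilinear forms on V, and suppose A'(v, w) = c·A(Ov, Ow) for all v, w ∈ V, where O : V → V is an orthogonal transformation and c > 0 is a positive real number. Then the Cahen–Wallach Lie algebras 𝔤_A and 𝔤_{A'} are isomorphic as Lie algebras. -/
open scoped RealInnerProductSpace

noncomputable section

variable {V : Type*} [NormedAddCommGroup V] [InnerProductSpace ℝ V] [FiniteDimensional ℝ V]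

lemma inner_sharp (α : Module.Dual ℝ V) (w : V) : ⟪sharp α, w⟫ = α w := by
  simp [sharp, InnerProductSpace.toDual_symm_apply]

lemma flat_apply (v w : V) : flat v w = ⟪v, w⟫ := rfl

lemma sharp_dual (O : V ≃ₗᵢ[ℝ] V) (α : Module.Dual ℝ V) :
    sharp (O.toLinearEquiv.dualMap α) = O.symm (sharp α) := by
  apply ext_inner_right ℝ
  intro w
  rw [inner_sharp]
  have : ⟪O.symm (sharp α), w⟫ = ⟪sharp α, O w⟫ := by
    conv_rhs => rw [← O.apply_symm_apply (sharp α)]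
    exact (O.inner_map_map _ _).symm
  rw [this, inner_sharp]
  rfl

lemma flat_symm (O : V ≃ₗᵢ[ℝ] V) (v : V) :
    flat (O.symm v) = O.toLinearEquiv.dualMap (flat v) := by
  ext w
  show ⟪O.symm v, w⟫ = flat v (O w)
  rw [flat_apply, ← O.apply_symm_apply v, O.symm_apply_apply, O.inner_map_map]

/-- If `A'(v,w) = c·A(Ov, Ow)` for all `v, w ∈ V`, where `O` is an
orthogonal transformation of `V` and `c > 0`, then the Cahen--Wallach Lie algebras
`𝔤_A` and `𝔤_{A'}` are isomorphic as Lie algebras: there is a linear equivalence of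
the underlying vector spaces intertwining the two brackets. -/
theorem cw_isomorphic (A A' : LinearMap.BilinForm ℝ V)
    (hA : A.IsSymm) (hA' : A'.IsSymm)
    (O : V ≃ₗᵢ[ℝ] V) (c : ℝ) (hc : 0 < c)
    (h : ∀ v w : V, A' v w = c * A (O v) (O w)) :
    ∃ e : CW V ≃ₗ[ℝ] CW V,
      ∀ x y : CW V, e (cwBracket A x y) = cwBracket A' (e x) (e y) := by
  have hs : Real.sqrt c ≠ 0 := Real.sqrt_ne_zero'.2 hc
  have hss : Real.sqrt c * Real.sqrt c = c := Real.mul_self_sqrt hc.le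
  -- key: sharp (A' u) = c • O.symm (sharp (A (O u)))
  have key : ∀ u : V, sharp (A' u) = c • O.symm (sharp (A (O u))) := by
    intro u
    apply ext_inner_right ℝ
    intro w
    rw [inner_sharp, h u w, inner_smul_left]
    have : ⟪O.symm (sharp (A (O u))), w⟫ = ⟪sharp (A (O u)), O w⟫ := by
      conv_rhs => rw [← O.apply_symm_apply (sharp (A (O u)))]
      exact (O.inner_map_map _ _).symm
    rw [this, inner_sharp]
    simp
  have hr : c * Real.sqrt c ≠ 0 := mul_ne_zero hc.ne' hs
  let e1 : V ≃ₗ[ℝ] V :=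
    (O.symm.toLinearEquiv : V ≃ₗ[ℝ] V).trans (LinearEquiv.smulOfNeZero ℝ V (Real.sqrt c) hs)
  let e2 : Module.Dual ℝ V ≃ₗ[ℝ] Module.Dual ℝ V :=
    LinearEquiv.dualMap (O.toLinearEquiv : V ≃ₗ[ℝ] V)
  let e3 : ℝ ≃ₗ[ℝ] ℝ := LinearEquiv.smulOfNeZero ℝ ℝ (c * Real.sqrt c) hr
  let e4 : ℝ ≃ₗ[ℝ] ℝ := LinearEquiv.smulOfNeZero ℝ ℝ (Real.sqrt c)⁻¹ (inv_ne_zero hs)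
  refine ⟨e1.prodCongr (e2.prodCongr (e3.prodCongr e4)), ?_⟩
  rintro ⟨v, α, a, b⟩ ⟨w, β, a', b'⟩
  simp only [LinearEquiv.prodCongr_apply, LinearEquiv.trans_apply, Prod.map_apply,
    LinearEquiv.smulOfNeZero_apply, LinearIsometryEquiv.coe_toLinearEquiv, cwBracket]
  have h1 : ∀ γ : Module.Dual ℝ V, O (sharp (e2 γ)) = sharp γ := fun γ => by
    rw [show e2 γ = O.toLinearEquiv.dualMap γ from rfl, sharp_dual, O.apply_symm_apply]
  have h2 : ∀ γ : Module.Dual ℝ V, sharp (e2 γ) = O.symm (sharp γ) := fun γ => by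
    rw [show e2 γ = O.toLinearEquiv.dualMap γ from rfl, sharp_dual]
  have he4 : ∀ t : ℝ, e4 t = (Real.sqrt c)⁻¹ * t := fun t => rfl
  have he3 : ∀ t : ℝ, e3 t = (c * Real.sqrt c) * t := fun t => rfl
  have he1 : ∀ u : V, e1 u = Real.sqrt c • O.symm u := fun u => rfl
  refine Prod.ext ?_ (Prod.ext ?_ (Prod.ext ?_ (show e4 0 = 0 from map_zero e4)))
  · show e1 (b • sharp (A (sharp β)) - b' • sharp (A (sharp α)))
        = e4 b • sharp (A' (sharp (e2 β))) - e4 b' • sharp (A' (sharp (e2 α)))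
    rw [map_sub, map_smul, map_smul, he1, he1, h2, h2, key, key, O.apply_symm_apply,
      O.apply_symm_apply, he4, he4, smul_smul, smul_smul, smul_smul, smul_smul]
    rw [show b * Real.sqrt c = (Real.sqrt c)⁻¹ * b * c by
        field_simp; rw [sq, hss],
      show b' * Real.sqrt c = (Real.sqrt c)⁻¹ * b' * c by
        field_simp; rw [sq, hss]]
  · show e2 (b • flat w - b' • flat v) = e4 b • flat (e1 w) - e4 b' • flat (e1 v)
    have hf : ∀ u : V, flat (e1 u) = Real.sqrt c • e2 (flat u) := fun u => by
      rw [he1, show ∀ m : V, flat m = flat m from fun _ => rfl]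
      ext z
      simp only [LinearMap.smul_apply, smul_eq_mul]
      rw [show (flat (Real.sqrt c • O.symm u)) z = ⟪Real.sqrt c • O.symm u, z⟫ from rfl,
        real_inner_smul_left]
      congr 1
      rw [show e2 (flat u) = O.toLinearEquiv.dualMap (flat u) from rfl, ← flat_symm]
      exact rfl
    rw [map_sub, map_smul, map_smul, hf, hf, smul_smul, smul_smul, he4, he4]
    rw [show (Real.sqrt c)⁻¹ * b * Real.sqrt c = b by field_simp,
      show (Real.sqrt c)⁻¹ * b' * Real.sqrt c = b' by field_simp]
  · show e3 (A w (sharp α) - A v (sharp β))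
        = A' (e1 w) (sharp (e2 α)) - A' (e1 v) (sharp (e2 β))
    have hAA : ∀ (u : V) (γ : Module.Dual ℝ V),
        A' (e1 u) (sharp (e2 γ)) = (c * Real.sqrt c) * A u (sharp γ) := fun u γ => by
      rw [he1, h2, map_smul, LinearMap.smul_apply, h, O.apply_symm_apply, O.apply_symm_apply,
        smul_eq_mul]
      ring
    rw [map_sub, he3, he3, hAA, hAA]


end
end
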